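/- Let ρ, σ, ω, ϑ be positive semidefinite complex matrices of the same finite size satisfying ρσ = 0, ρϑ = 0, σω = 0 and ωϑ = 0. Then D(ρ+σ‖ω+ϑ) = D(ρ‖ω) + D(σ‖ϑ), with equality in [0,+∞]. -/

import Mathlib

open scoped ENNReal ComplexOrder

/-- `Log X`: functional calculus of the real logarithm (with `log 0 = 0`)
applied to a Hermitian (in particular, positive semidefinite) matrix `X`;
defined as `0` on non-Hermitian matrices. -/
noncomputable def matLog {n : Type*} [Fintype n] [DecidableEq n]
    (X : Matrix n n ℂ) : Matrix n n ℂ :=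
  if hX : X.IsHermitian then hX.cfc Real.log else 0

/-- Lindblad's extended quantum relative entropy `D(ρ‖σ)`, with values in `[0,+∞]`:
`D(ρ‖σ) = Tr(ρ·Log ρ) − Tr(ρ·Log σ) + Tr σ − Tr ρ` if `ran ρ ⊆ ran σ`, and `+∞` otherwise. -/
noncomputable def relEnt {n : Type*} [Fintype n] [DecidableEq n]
    (ρ σ : Matrix n n ℂ) : ℝ≥0∞ :=
  open Classical in
  if LinearMap.range ρ.mulVecLin ≤ LinearMap.range σ.mulVecLin then
    ENNReal.ofReal ((ρ * matLog ρ).trace.re - (ρ * matLog σ).trace.re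
      + σ.trace.re - ρ.trace.re)
  else ∞

section Aux

open Matrix (mulVec vecMul)
open scoped Matrix

set_option linter.unusedSectionVars false
variable {n : Type*} [Fintype n] [DecidableEq n]

lemma mulz_symm {A B : Matrix n n ℂ} (hA : A.IsHermitian) (hB : B.IsHermitian)
    (h : A * B = 0) : B * A = 0 := by
  have := congrArg Matrix.conjTranspose h
  rwa [Matrix.conjTranspose_mul, hA.eq, hB.eq, Matrix.conjTranspose_zero] at this

lemma pow_add_of_orth {A B : Matrix n n ℂ} (hAB : A * B = 0) (hBA : B * A = 0)
    (k : ℕ) (hk : k ≠ 0) : (A + B) ^ k = A ^ k + B ^ k := by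
  induction k with
  | zero => simp at hk
  | succ m ih =>
    rcases Nat.eq_zero_or_pos m with hm | hm
    · subst hm; simp
    have hAmB : A ^ m * B = 0 := by
      obtain ⟨l, rfl⟩ := Nat.exists_eq_succ_of_ne_zero hm.ne'
      rw [pow_succ, mul_assoc, hAB, mul_zero]
    have hBmA : B ^ m * A = 0 := by
      obtain ⟨l, rfl⟩ := Nat.exists_eq_succ_of_ne_zero hm.ne'
      rw [pow_succ, mul_assoc, hBA, mul_zero]
    rw [pow_succ, ih hm.ne', add_mul, mul_add, mul_add, hAmB, hBmA,
      ← pow_succ, ← pow_succ]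
    simp

open Polynomial in
lemma aeval_add_of_orth {A B : Matrix n n ℂ} (hAB : A * B = 0) (hBA : B * A = 0)
    (p : ℝ[X]) (hp : p.coeff 0 = 0) :
    aeval (A + B) p = aeval A p + aeval B p := by
  obtain ⟨N, hA', hB', hS'⟩ : ∃ N, p.natDegree < N ∧ p.natDegree < N ∧ p.natDegree < N :=
    ⟨p.natDegree + 1, by omega, by omega, by omega⟩
  rw [aeval_eq_sum_range' hA', aeval_eq_sum_range' hB', aeval_eq_sum_range' hS',
    ← Finset.sum_add_distrib]
  refine Finset.sum_congr rfl fun k _ => ?_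
  rcases Nat.eq_zero_or_pos k with hk | hk
  · subst hk; simp [hp]
  · rw [pow_add_of_orth hAB hBA k hk.ne', smul_add]

open Polynomial in
lemma matLog_eq_aeval {A : Matrix n n ℂ} (hA : A.IsHermitian) (p : ℝ[X])
    (hspec : ∀ x ∈ spectrum ℝ A, p.eval x = Real.log x) :
    matLog A = aeval A p := by
  have hA' : IsSelfAdjoint A := hA
  rw [matLog, dif_pos hA, ← hA.cfc_eq, ← cfc_polynomial p A hA']
  exact cfc_congr fun x hx => (hspec x hx).symm

open Polynomial in
lemma matLog_add {A B : Matrix n n ℂ} (hA : A.PosSemidef) (hB : B.PosSemidef)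
    (hAB : A * B = 0) : matLog (A + B) = matLog A + matLog B := by
  have hBA : B * A = 0 := mulz_symm hA.1 hB.1 hAB
  classical
  set S : Finset ℝ := (Matrix.finite_real_spectrum (A := A)).toFinset ∪ (Matrix.finite_real_spectrum (A := B)).toFinset
      ∪ (Matrix.finite_real_spectrum (A := A + B)).toFinset ∪ {0} with hS
  set p : ℝ[X] := Lagrange.interpolate S id Real.log with hpdef
  have hnode : ∀ x ∈ S, p.eval x = Real.log x := fun x hx => by
    simpa [hpdef] using Lagrange.eval_interpolate_at_node (r := Real.log) (Set.injOn_id _) hx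
  have hp0 : p.coeff 0 = 0 := by
    rw [coeff_zero_eq_eval_zero, hnode 0 (by simp [hS]), Real.log_zero]
  have e1 : matLog A = aeval A p :=
    matLog_eq_aeval hA.1 p fun x hx => hnode x (by simp [hS, Set.Finite.mem_toFinset, hx])
  have e2 : matLog B = aeval B p :=
    matLog_eq_aeval hB.1 p fun x hx => hnode x (by simp [hS, Set.Finite.mem_toFinset, hx])
  have e3 : matLog (A + B) = aeval (A + B) p :=
    matLog_eq_aeval (hA.1.add hB.1) p fun x hx => hnode x (by simp [hS, Set.Finite.mem_toFinset, hx])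
  rw [e1, e2, e3, aeval_add_of_orth hAB hBA p hp0]

open Polynomial in
lemma mul_matLog_zero {A B : Matrix n n ℂ} (hB : B.IsHermitian)
    (hAB : A * B = 0) : A * matLog B = 0 := by
  classical
  set S : Finset ℝ := (Matrix.finite_real_spectrum (A := B)).toFinset ∪ {0} with hS
  set p : ℝ[X] := Lagrange.interpolate S id Real.log with hpdef
  have hnode : ∀ x ∈ S, p.eval x = Real.log x := fun x hx => by
    simpa [hpdef] using Lagrange.eval_interpolate_at_node (r := Real.log) (Set.injOn_id _) hx
  have hp0 : p.coeff 0 = 0 := by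
    rw [coeff_zero_eq_eval_zero, hnode 0 (by simp [hS]), Real.log_zero]
  obtain ⟨q, hq⟩ := X_dvd_iff.mpr hp0
  have e1 : matLog B = aeval B p := matLog_eq_aeval hB p fun x hx => hnode x (by simp [hS, Set.Finite.mem_toFinset, hx])
  rw [e1, hq, map_mul, aeval_X, ← mul_assoc, hAB, zero_mul]

lemma mulVec_eq_zero_of_sq {A : Matrix n n ℂ} (hA : A.IsHermitian) {x : n → ℂ}
    (h : (A * A) *ᵥ x = 0) : A *ᵥ x = 0 := by
  have key : dotProduct (star (A *ᵥ x)) (A *ᵥ x) = 0 := by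
    rw [Matrix.star_mulVec, ← Matrix.dotProduct_mulVec, Matrix.mulVec_mulVec, hA.eq, h,
      dotProduct_zero]
  exact dotProduct_star_self_eq_zero.mp key

lemma range_sq {A : Matrix n n ℂ} (hA : A.IsHermitian) :
    LinearMap.range (A * A).mulVecLin = LinearMap.range A.mulVecLin := by
  have hker : LinearMap.ker (A * A).mulVecLin = LinearMap.ker A.mulVecLin := by
    refine le_antisymm (fun x hx => ?_) (fun x hx => ?_)
    · exact mulVec_eq_zero_of_sq hA hx
    · simp only [LinearMap.mem_ker, Matrix.mulVecLin_apply] at *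
      rw [← Matrix.mulVec_mulVec, hx, Matrix.mulVec_zero]
  have hle : LinearMap.range (A * A).mulVecLin ≤ LinearMap.range A.mulVecLin := by
    rintro y ⟨x, rfl⟩
    exact ⟨A *ᵥ x, by simp [Matrix.mulVecLin_apply, Matrix.mulVec_mulVec]⟩
  refine Submodule.eq_of_le_of_finrank_le hle ?_
  have h1 := (A * A).mulVecLin.finrank_range_add_finrank_ker
  have h2 := A.mulVecLin.finrank_range_add_finrank_ker
  rw [hker] at h1
  omega

lemma range_le_add_of_orth {A B : Matrix n n ℂ} (hA : A.PosSemidef) (hB : B.PosSemidef)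
    (hAB : A * B = 0) :
    LinearMap.range A.mulVecLin ≤ LinearMap.range (A + B).mulVecLin := by
  have hBA : B * A = 0 := mulz_symm hA.1 hB.1 hAB
  rintro y ⟨x, rfl⟩
  have : A.mulVecLin x ∈ LinearMap.range (A * A).mulVecLin := by
    rw [range_sq hA.1]; exact ⟨x, rfl⟩
  obtain ⟨z, hz⟩ := this
  refine ⟨A *ᵥ z, ?_⟩
  simp only [Matrix.mulVecLin_apply] at *
  rw [Matrix.mulVec_mulVec, add_mul, hBA, add_zero, ← hz]

lemma range_add_split {ρ σ ω ϑ : Matrix n n ℂ}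
    (hρ : ρ.PosSemidef) (hσ : σ.PosSemidef) (hω : ω.PosSemidef) (hϑ : ϑ.PosSemidef)
    (h1 : ρ * σ = 0) (h2 : ρ * ϑ = 0) (h3 : σ * ω = 0) (h4 : ω * ϑ = 0) :
    LinearMap.range (ρ + σ).mulVecLin ≤ LinearMap.range (ω + ϑ).mulVecLin ↔
      (LinearMap.range ρ.mulVecLin ≤ LinearMap.range ω.mulVecLin ∧
       LinearMap.range σ.mulVecLin ≤ LinearMap.range ϑ.mulVecLin) := by
  have h1' : σ * ρ = 0 := mulz_symm hρ.1 hσ.1 h1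
  have h2' : ϑ * ρ = 0 := mulz_symm hρ.1 hϑ.1 h2
  have h3' : ω * σ = 0 := mulz_symm hσ.1 hω.1 h3
  have h4' : ϑ * ω = 0 := mulz_symm hω.1 hϑ.1 h4
  constructor
  · intro h
    constructor
    · rintro y ⟨x, rfl⟩
      obtain ⟨z, hz⟩ := h (range_le_add_of_orth hρ hσ h1 ⟨x, rfl⟩)
      simp only [Matrix.mulVecLin_apply] at hz ⊢
      have hz2 : ϑ *ᵥ z = 0 := by
        apply mulVec_eq_zero_of_sq hϑ.1
        have : ϑ *ᵥ ((ω + ϑ) *ᵥ z) = ϑ *ᵥ (ρ *ᵥ x) := by rw [hz]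
        rwa [Matrix.mulVec_mulVec, Matrix.mulVec_mulVec, mul_add, h4', zero_add,
          h2', Matrix.zero_mulVec] at this
      refine ⟨z, ?_⟩
      simp only [Matrix.mulVecLin_apply]
      rw [← hz, Matrix.add_mulVec, hz2, add_zero]
    · rintro y ⟨x, rfl⟩
      have hx : σ.mulVecLin x ∈ LinearMap.range (ρ + σ).mulVecLin := by
        rw [add_comm ρ σ]
        exact range_le_add_of_orth hσ hρ h1' ⟨x, rfl⟩
      obtain ⟨z, hz⟩ := h hx
      simp only [Matrix.mulVecLin_apply] at hz ⊢
      have hz2 : ω *ᵥ z = 0 := by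
        apply mulVec_eq_zero_of_sq hω.1
        have : ω *ᵥ ((ω + ϑ) *ᵥ z) = ω *ᵥ (σ *ᵥ x) := by rw [hz]
        rwa [Matrix.mulVec_mulVec, Matrix.mulVec_mulVec, mul_add, h4, add_zero,
          h3', Matrix.zero_mulVec] at this
      refine ⟨z, ?_⟩
      simp only [Matrix.mulVecLin_apply]
      rw [← hz, Matrix.add_mulVec, hz2, zero_add]
  · rintro ⟨ha, hb⟩ y ⟨x, rfl⟩
    have e : (ρ + σ).mulVecLin x = ρ.mulVecLin x + σ.mulVecLin x := by
      simp [Matrix.mulVecLin_apply, Matrix.add_mulVec]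
    rw [e]
    refine Submodule.add_mem _ (range_le_add_of_orth hω hϑ h4 (ha ⟨x, rfl⟩)) ?_
    have := range_le_add_of_orth hϑ hω h4' (hb ⟨x, rfl⟩)
    rwa [add_comm ϑ ω] at this

lemma spec_eq {A : Matrix n n ℂ} (hA : A.IsHermitian) :
    A = (hA.eigenvectorUnitary : Matrix n n ℂ) * Matrix.diagonal (RCLike.ofReal ∘ hA.eigenvalues)
      * star (hA.eigenvectorUnitary : Matrix n n ℂ) :=
  hA.spectral_theorem

lemma star_mul_self_eigU {A : Matrix n n ℂ} (hA : A.IsHermitian) :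
    star (hA.eigenvectorUnitary : Matrix n n ℂ) * (hA.eigenvectorUnitary : Matrix n n ℂ) = 1 :=
  Unitary.star_mul_self_of_mem (SetLike.coe_mem _)

lemma trace_conj_unitary {U M : Matrix n n ℂ} (hU : star U * U = 1) :
    (U * M * star U).trace = M.trace := by
  rw [Matrix.trace_mul_cycle, hU, one_mul]

lemma trace_mul_cfc_self {A : Matrix n n ℂ} (hA : A.IsHermitian) (f : ℝ → ℝ) :
    (A * hA.cfc f).trace = ∑ i, ((hA.eigenvalues i : ℂ) * (f (hA.eigenvalues i) : ℂ)) := by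
  set U := (hA.eigenvectorUnitary : Matrix n n ℂ) with hUdef
  set d : n → ℂ := RCLike.ofReal ∘ hA.eigenvalues with hd
  set e : n → ℂ := RCLike.ofReal ∘ f ∘ hA.eigenvalues with he
  have key : A * hA.cfc f = U * (Matrix.diagonal d * Matrix.diagonal e) * star U := by
    rw [show U * (Matrix.diagonal d * Matrix.diagonal e) * star U
        = (U * Matrix.diagonal d * star U) * (U * Matrix.diagonal e * star U) by
      rw [show U * Matrix.diagonal d * star U * (U * Matrix.diagonal e * star U)
          = U * (Matrix.diagonal d * (star U * U) * Matrix.diagonal e) * star U by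
        noncomm_ring, star_mul_self_eigU hA, mul_one]]
    rw [← spec_eq hA]
    rfl
  rw [key, trace_conj_unitary (star_mul_self_eigU hA), Matrix.diagonal_mul_diagonal,
    Matrix.trace_diagonal]
  rfl

lemma trace_mul_cfc {A B : Matrix n n ℂ} (hA : A.IsHermitian) (hB : B.IsHermitian) (f : ℝ → ℝ) :
    (A * hB.cfc f).trace = ∑ i, ∑ j, ((hA.eigenvalues i : ℂ) * (f (hB.eigenvalues j) : ℂ)
      * ((‖(star (hA.eigenvectorUnitary : Matrix n n ℂ)
          * (hB.eigenvectorUnitary : Matrix n n ℂ)) i j‖ : ℂ) ^ 2)) := by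
  set U := (hA.eigenvectorUnitary : Matrix n n ℂ) with hUdef
  set V := (hB.eigenvectorUnitary : Matrix n n ℂ) with hVdef
  set W := star U * V with hW
  set d : n → ℂ := RCLike.ofReal ∘ hA.eigenvalues with hd
  set e : n → ℂ := RCLike.ofReal ∘ f ∘ hB.eigenvalues with he
  have hUs : U * star U = 1 := Unitary.mul_star_self_of_mem (SetLike.coe_mem _)
  have step1 : A * hB.cfc f = (U * Matrix.diagonal d * star U) * (V * Matrix.diagonal e * star V) := by
    rw [← spec_eq hA]; rfl
  have key : A * hB.cfc f = U * (Matrix.diagonal d * W * Matrix.diagonal e * star W) * star U := by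
    rw [step1, hW, StarMul.star_mul, star_star]
    simp only [mul_assoc]
    rw [hUs, mul_one]
  rw [key, trace_conj_unitary (star_mul_self_eigU hA), Matrix.trace]
  congr 1
  ext i
  rw [Matrix.diag_apply, Matrix.mul_apply]
  congr 1
  ext j
  rw [Matrix.mul_apply]
  rw [Finset.sum_eq_single j ?h1 ?h2]
  · simp only [Matrix.mul_diagonal, Matrix.diagonal_mul, Matrix.star_apply, RCLike.star_def,
      Matrix.diagonal_apply_eq]
    rw [show d i * W i j * e j * (starRingEnd ℂ) (W i j)
        = d i * e j * (W i j * (starRingEnd ℂ) (W i j)) by ring, Complex.mul_conj,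
      Complex.normSq_eq_norm_sq]
    simp only [hd, he, Function.comp_apply,
      show (RCLike.ofReal : ℝ → ℂ) = Complex.ofReal from rfl]
    push_cast
    ring
  · intro b _ hb
    simp [Matrix.mul_diagonal, Matrix.diagonal_apply_ne e hb]
  · intro h
    exact absurd (Finset.mem_univ j) h

lemma trace_eq_sum_eigen {A : Matrix n n ℂ} (hA : A.IsHermitian) :
    A.trace = ∑ i, (hA.eigenvalues i : ℂ) := by
  have h := congrArg Matrix.trace (spec_eq hA)
  rw [h, trace_conj_unitary (star_mul_self_eigU hA), Matrix.trace_diagonal]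
  rfl

lemma row_sum_norm {W : Matrix n n ℂ} (hWW : W * star W = 1) (i : n) :
    ∑ j, ‖W i j‖ ^ 2 = 1 := by
  have h := congrFun (congrFun hWW i) i
  rw [Matrix.mul_apply, Matrix.one_apply_eq] at h
  have key : ∑ j, ((‖W i j‖ ^ 2 : ℝ) : ℂ) = 1 := by
    rw [← h]
    refine Finset.sum_congr rfl fun j _ => ?_
    rw [Matrix.star_apply, RCLike.star_def, Complex.mul_conj, Complex.normSq_eq_norm_sq]
  exact_mod_cast key

lemma col_sum_norm {W : Matrix n n ℂ} (hWW : star W * W = 1) (j : n) :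
    ∑ i, ‖W i j‖ ^ 2 = 1 := by
  have h : (star W) * star (star W) = 1 := by rwa [star_star]
  have := row_sum_norm h j
  simpa [Matrix.star_apply, norm_star] using this

lemma kerProj_mul_eq_zero {ρ ω : Matrix n n ℂ} (hω : ω.IsHermitian)
    (hrange : LinearMap.range ρ.mulVecLin ≤ LinearMap.range ω.mulVecLin) :
    hω.cfc (fun x => if x = 0 then 1 else 0) * ρ = 0 := by
  set g : ℝ → ℝ := fun x => if x = 0 then 1 else 0 with hg
  set K := hω.cfc g with hK
  have hKω : K * ω = 0 := by
    set V := (hω.eigenvectorUnitary : Matrix n n ℂ) with hV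
    have hVs : star V * V = 1 := star_mul_self_eigU hω
    have hω' : ω = V * Matrix.diagonal (RCLike.ofReal ∘ hω.eigenvalues) * star V :=
      spec_eq hω
    have hK' : K = V * Matrix.diagonal (RCLike.ofReal ∘ g ∘ hω.eigenvalues) * star V := rfl
    suffices hsuf : K * (V * Matrix.diagonal (RCLike.ofReal ∘ hω.eigenvalues) * star V) = 0 by
      rw [← hω'] at hsuf; exact hsuf
    rw [hK']
    calc V * Matrix.diagonal (RCLike.ofReal ∘ g ∘ hω.eigenvalues) * star V *
          (V * Matrix.diagonal (RCLike.ofReal ∘ hω.eigenvalues) * star V)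
        = V * (Matrix.diagonal (RCLike.ofReal ∘ g ∘ hω.eigenvalues) * (star V * V) *
            Matrix.diagonal (RCLike.ofReal ∘ hω.eigenvalues)) * star V := by
          simp only [mul_assoc]
      _ = V * (Matrix.diagonal (RCLike.ofReal ∘ g ∘ hω.eigenvalues) *
            Matrix.diagonal (RCLike.ofReal ∘ hω.eigenvalues)) * star V := by rw [hVs, mul_one]
      _ = 0 := by
          rw [Matrix.diagonal_mul_diagonal]
          have hz : (fun i => (RCLike.ofReal ∘ g ∘ hω.eigenvalues) i
              * (RCLike.ofReal ∘ hω.eigenvalues) i) = (fun _ : n => (0 : ℂ)) := by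
            funext i
            simp only [Function.comp_apply, hg]
            by_cases h0 : hω.eigenvalues i = 0 <;> simp [h0]
          rw [hz]
          simp
  have : (K * ρ).mulVecLin = 0 := by
    apply LinearMap.ext
    intro x
    obtain ⟨y, hy⟩ := hrange ⟨x, rfl⟩
    simp only [Matrix.mulVecLin_mul, LinearMap.coe_comp, Function.comp_apply,
      Matrix.mulVecLin_apply, LinearMap.zero_apply] at *
    rw [← hy, Matrix.mulVec_mulVec, hKω, Matrix.zero_mulVec]
  ext i j
  have hj := congrFun (LinearMap.congr_fun this (Pi.single j 1)) i
  simpa [Matrix.mulVecLin_apply, Matrix.mulVec_single, Matrix.mulVec, Matrix.mul_apply, dotProduct] using hj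

lemma klein_term (p q c : ℝ) (hp : 0 ≤ p) (hq : 0 ≤ q) (hc : 0 ≤ c)
    (hker : q = 0 → c * p = 0) :
    0 ≤ c * (p * Real.log p - p * Real.log q - p + q) := by
  rcases eq_or_lt_of_le hq with hq0 | hqpos
  · have hcp := hker hq0.symm
    have : c * (p * Real.log p - p * Real.log q - p + q)
        = (c * p) * Real.log p - (c * p) * Real.log q - (c * p) + c * q := by ring
    rw [this, hcp, ← hq0]
    simp
  · rcases eq_or_lt_of_le hp with hp0 | hppos
    · rw [← hp0]
      simp only [zero_mul, Real.log_zero, mul_zero, sub_zero, zero_sub, neg_zero, zero_add]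
      exact mul_nonneg hc hq
    · have key : p * Real.log q - p * Real.log p ≤ q - p := by
        have hlog := Real.log_le_sub_one_of_pos (div_pos hqpos hppos)
        rw [Real.log_div hqpos.ne' hppos.ne'] at hlog
        have := mul_le_mul_of_nonneg_left hlog hp
        calc p * Real.log q - p * Real.log p = p * (Real.log q - Real.log p) := by ring
          _ ≤ p * (q / p - 1) := this
          _ = q - p := by field_simp
      have h0 : 0 ≤ p * Real.log p - p * Real.log q - p + q := by linarith
      exact mul_nonneg hc h0

lemma klein_nonneg {ρ ω : Matrix n n ℂ} (hρ : ρ.PosSemidef) (hω : ω.PosSemidef)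
    (hrange : LinearMap.range ρ.mulVecLin ≤ LinearMap.range ω.mulVecLin) :
    0 ≤ (ρ * matLog ρ).trace.re - (ρ * matLog ω).trace.re + ω.trace.re - ρ.trace.re := by
  set p := hρ.1.eigenvalues with hp
  set q := hω.1.eigenvalues with hq
  set U := (hρ.1.eigenvectorUnitary : Matrix n n ℂ) with hU
  set V := (hω.1.eigenvectorUnitary : Matrix n n ℂ) with hV
  set W := star U * V with hW
  have hWmem : W ∈ unitary (Matrix n n ℂ) :=
    mul_mem (Unitary.star_mem (SetLike.coe_mem _)) (SetLike.coe_mem _)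
  have hWs : W * star W = 1 := Unitary.mul_star_self_of_mem hWmem
  have hsW : star W * W = 1 := Unitary.star_mul_self_of_mem hWmem
  set c : n → n → ℝ := fun i j => ‖W i j‖ ^ 2 with hc
  have hcnn : ∀ i j, 0 ≤ c i j := fun i j => by positivity
  have hrow : ∀ i, ∑ j, c i j = 1 := fun i => row_sum_norm hWs i
  have hcol : ∀ j, ∑ i, c i j = 1 := fun j => col_sum_norm hsW j
  have hpnn : ∀ i, 0 ≤ p i := fun i => hρ.eigenvalues_nonneg i
  have hqnn : ∀ j, 0 ≤ q j := fun j => hω.eigenvalues_nonneg j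
  -- the four trace identities
  have e1 : (ρ * matLog ρ).trace.re = ∑ i, p i * Real.log (p i) := by
    rw [matLog, dif_pos hρ.1, trace_mul_cfc_self hρ.1 Real.log]
    push_cast
    simp
    rfl
  have e2' : (ρ * matLog ω).trace = ((∑ i, ∑ j, p i * Real.log (q j) * c i j : ℝ) : ℂ) := by
    rw [matLog, dif_pos hω.1, trace_mul_cfc hρ.1 hω.1 Real.log]
    simp only [hc]
    push_cast
    rfl
  have e2 : (ρ * matLog ω).trace.re = ∑ i, ∑ j, p i * Real.log (q j) * c i j := by
    rw [e2', Complex.ofReal_re]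
  have e3 : ω.trace.re = ∑ j, q j := by
    rw [trace_eq_sum_eigen hω.1]
    push_cast
    simp
    rfl
  have e4 : ρ.trace.re = ∑ i, p i := by
    rw [trace_eq_sum_eigen hρ.1]
    push_cast
    simp
    rfl
  -- kernel condition
  have hker : ∀ i j, q j = 0 → c i j * p i = 0 := by
    set g : ℝ → ℝ := fun x => if x = 0 then 1 else 0 with hg
    have hKρ : hω.1.cfc g * ρ = 0 := kerProj_mul_eq_zero hω.1 hrange
    have htr : (ρ * hω.1.cfc g).trace = 0 := by
      rw [Matrix.trace_mul_comm, hKρ, Matrix.trace_zero]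
    have htrC : (ρ * hω.1.cfc g).trace = ((∑ i, ∑ j, p i * g (q j) * c i j : ℝ) : ℂ) := by
      rw [trace_mul_cfc hρ.1 hω.1 g]
      simp only [hc]
      push_cast
      rfl
    have htr' : ∑ i, ∑ j, p i * g (q j) * c i j = 0 := by
      rw [htrC] at htr
      exact_mod_cast htr
    have hnn : ∀ i ∈ Finset.univ, (0:ℝ) ≤ ∑ j, p i * g (q j) * c i j := by
      intro i _
      refine Finset.sum_nonneg fun j _ => ?_
      have : 0 ≤ g (q j) := by rw [hg]; dsimp only; split <;> norm_num
      exact mul_nonneg (mul_nonneg (hpnn i) this) (hcnn i j)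
    intro i j hqj
    have hrow0 := (Finset.sum_eq_zero_iff_of_nonneg hnn).mp htr' i (Finset.mem_univ i)
    have hnn2 : ∀ j ∈ Finset.univ, (0:ℝ) ≤ p i * g (q j) * c i j := by
      intro j _
      have : 0 ≤ g (q j) := by rw [hg]; dsimp only; split <;> norm_num
      exact mul_nonneg (mul_nonneg (hpnn i) this) (hcnn i j)
    have hterm := (Finset.sum_eq_zero_iff_of_nonneg hnn2).mp hrow0 j (Finset.mem_univ j)
    rw [hg] at hterm
    simp only [hqj, if_pos rfl] at hterm
    have hpc : p i * c i j = 0 := by simpa using hterm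
    rw [mul_comm]
    exact hpc
  -- rewrite everything as a single double sum
  rw [e1, e2, e3, e4]
  have key : ∑ i, p i * Real.log (p i) - (∑ i, ∑ j, p i * Real.log (q j) * c i j)
      + ∑ j, q j - ∑ i, p i
      = ∑ i, ∑ j, c i j * (p i * Real.log (p i) - p i * Real.log (q j) - p i + q j) := by
    have a1 : ∑ i, p i * Real.log (p i) = ∑ i, ∑ j, c i j * (p i * Real.log (p i)) := by
      refine Finset.sum_congr rfl fun i _ => ?_
      rw [← Finset.sum_mul, hrow i, one_mul]
    have a3 : ∑ j, q j = ∑ i, ∑ j, c i j * q j := by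
      rw [Finset.sum_comm]
      refine Finset.sum_congr rfl fun j _ => ?_
      rw [← Finset.sum_mul, hcol j, one_mul]
    have a4 : ∑ i, p i = ∑ i, ∑ j, c i j * p i := by
      refine Finset.sum_congr rfl fun i _ => ?_
      rw [← Finset.sum_mul, hrow i, one_mul]
    rw [a1, a3, a4, ← Finset.sum_sub_distrib, ← Finset.sum_add_distrib, ← Finset.sum_sub_distrib]
    refine Finset.sum_congr rfl fun i _ => ?_
    rw [← Finset.sum_sub_distrib, ← Finset.sum_add_distrib, ← Finset.sum_sub_distrib]
    refine Finset.sum_congr rfl fun j _ => ?_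
    ring
  rw [key]
  refine Finset.sum_nonneg fun i _ => Finset.sum_nonneg fun j _ => ?_
  exact klein_term (p i) (q j) (c i j) (hpnn i) (hqnn j) (hcnn i j) (hker i j)

end Aux

/-- Additivity on orthogonal pairs: if `ρσ = ρϑ = σω = ωϑ = 0` then
`D(ρ+σ‖ω+ϑ) = D(ρ‖ω) + D(σ‖ϑ)` in `[0,+∞]`. -/
theorem relEnt_add_eq {n : Type*} [Fintype n] [DecidableEq n]
    (ρ σ ω ϑ : Matrix n n ℂ)
    (hρ : ρ.PosSemidef) (hσ : σ.PosSemidef) (hω : ω.PosSemidef) (hϑ : ϑ.PosSemidef)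
    (h1 : ρ * σ = 0) (h2 : ρ * ϑ = 0) (h3 : σ * ω = 0) (h4 : ω * ϑ = 0) :
    relEnt (ρ + σ) (ω + ϑ) = relEnt ρ ω + relEnt σ ϑ := by
  have h1' : σ * ρ = 0 := mulz_symm hρ.1 hσ.1 h1
  have h2' : ϑ * ρ = 0 := mulz_symm hρ.1 hϑ.1 h2
  have h3' : ω * σ = 0 := mulz_symm hσ.1 hω.1 h3
  have h4' : ϑ * ω = 0 := mulz_symm hω.1 hϑ.1 h4
  have hsplit := range_add_split hρ hσ hω hϑ h1 h2 h3 h4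
  simp only [relEnt]
  by_cases hcond : LinearMap.range (ρ + σ).mulVecLin ≤ LinearMap.range (ω + ϑ).mulVecLin
  · obtain ⟨hra, hrb⟩ := hsplit.mp hcond
    rw [if_pos hcond, if_pos hra, if_pos hrb]
    have hL1 : matLog (ρ + σ) = matLog ρ + matLog σ := matLog_add hρ hσ h1
    have hL2 : matLog (ω + ϑ) = matLog ω + matLog ϑ := matLog_add hω hϑ h4
    have t1 : ((ρ + σ) * matLog (ρ + σ)).trace
        = (ρ * matLog ρ).trace + (σ * matLog σ).trace := by
      rw [hL1, add_mul, mul_add, mul_add, mul_matLog_zero hσ.1 h1,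
        mul_matLog_zero hρ.1 h1', add_zero, zero_add, Matrix.trace_add]
    have t2 : ((ρ + σ) * matLog (ω + ϑ)).trace
        = (ρ * matLog ω).trace + (σ * matLog ϑ).trace := by
      rw [hL2, add_mul, mul_add, mul_add, mul_matLog_zero hϑ.1 h2,
        mul_matLog_zero hω.1 h3, add_zero, zero_add, Matrix.trace_add]
    have hA0 := klein_nonneg hρ hω hra
    have hB0 := klein_nonneg hσ hϑ hrb
    rw [← ENNReal.ofReal_add hA0 hB0]
    congr 1
    rw [t1, t2, Matrix.trace_add, Matrix.trace_add]
    simp only [Complex.add_re]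
    ring
  · rw [if_neg hcond]
    by_cases hra : LinearMap.range ρ.mulVecLin ≤ LinearMap.range ω.mulVecLin
    · have hrb : ¬ LinearMap.range σ.mulVecLin ≤ LinearMap.range ϑ.mulVecLin := by
        intro hrb
        exact hcond (hsplit.mpr ⟨hra, hrb⟩)
      rw [if_neg hrb, add_top _]
    · rw [if_neg hra, top_add _]
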